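/- Let S be a finite set with |S| = 10, and let 𝔖 be a collection of subsets of S such that: (i) for any r, s ∈ 𝔖, |r △ s| ∈ {0, 4, 6, 10}; and (ii) s ∈ 𝔖 implies the complement S∖s ∈ 𝔖. Then |𝔖| ≤ 32. -/
import Mathlib

private lemma sum_pm_eq {α : Type*} [DecidableEq α] (S r s : Finset α)
    (hr : r ⊆ S) (hs : s ⊆ S) :
    (∑ a ∈ S, (if a ∈ r then (1:ℤ) else -1) * (if a ∈ s then (1:ℤ) else -1))
      = (S.card : ℤ) - 2 * (symmDiff r s).card := by
  have hsub : symmDiff r s ⊆ S := by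
    intro a ha
    rw [Finset.mem_symmDiff] at ha
    rcases ha with ⟨h1, _⟩ | ⟨h1, _⟩
    · exact hr h1
    · exact hs h1
  have hterm : ∀ a ∈ S, (if a ∈ r then (1:ℤ) else -1) * (if a ∈ s then (1:ℤ) else -1)
      = 1 - 2 * (if a ∈ symmDiff r s then (1:ℤ) else 0) := by
    intro a _
    by_cases h1 : a ∈ r <;> by_cases h2 : a ∈ s <;>
      simp [h1, h2, Finset.mem_symmDiff]
  rw [Finset.sum_congr rfl hterm, Finset.sum_sub_distrib, Finset.sum_const,
    ← Finset.mul_sum, Finset.sum_ite_mem, Finset.inter_eq_right.mpr hsub,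
    Finset.sum_const]
  ring

private lemma quad_swap {α β : Type*} (A : Finset β) (S : Finset α) (F : β → α → ℤ) :
    ∑ r ∈ A, ∑ s ∈ A, (∑ a ∈ S, F r a * F s a) ^ 2
      = ∑ a ∈ S, ∑ b ∈ S, (∑ r ∈ A, F r a * F r b) ^ 2 := by
  have e1 : ∀ r s : β, (∑ a ∈ S, F r a * F s a) ^ 2
      = ∑ a ∈ S, ∑ b ∈ S, (F r a * F s a) * (F r b * F s b) := by
    intro r s; rw [sq, Finset.sum_mul_sum]
  have e2 : ∀ a b : α, (∑ r ∈ A, F r a * F r b) ^ 2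
      = ∑ r ∈ A, ∑ s ∈ A, (F r a * F r b) * (F s a * F s b) := by
    intro a b; rw [sq, Finset.sum_mul_sum]
  simp only [e1, e2]
  calc ∑ r ∈ A, ∑ s ∈ A, ∑ a ∈ S, ∑ b ∈ S, (F r a * F s a) * (F r b * F s b)
      = ∑ r ∈ A, ∑ a ∈ S, ∑ s ∈ A, ∑ b ∈ S, (F r a * F s a) * (F r b * F s b) :=
        Finset.sum_congr rfl fun r _ => Finset.sum_comm
    _ = ∑ a ∈ S, ∑ r ∈ A, ∑ s ∈ A, ∑ b ∈ S, (F r a * F s a) * (F r b * F s b) :=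
        Finset.sum_comm
    _ = ∑ a ∈ S, ∑ r ∈ A, ∑ b ∈ S, ∑ s ∈ A, (F r a * F s a) * (F r b * F s b) :=
        Finset.sum_congr rfl fun a _ => Finset.sum_congr rfl fun r _ => Finset.sum_comm
    _ = ∑ a ∈ S, ∑ b ∈ S, ∑ r ∈ A, ∑ s ∈ A, (F r a * F s a) * (F r b * F s b) :=
        Finset.sum_congr rfl fun a _ => Finset.sum_comm
    _ = ∑ a ∈ S, ∑ b ∈ S, ∑ r ∈ A, ∑ s ∈ A, (F r a * F r b) * (F s a * F s b) := by
        apply Finset.sum_congr rfl; intro a _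
        apply Finset.sum_congr rfl; intro b _
        apply Finset.sum_congr rfl; intro r _
        apply Finset.sum_congr rfl; intro s _
        ring

/-- The case n = 10 of Lemma `lem.max.set.D`. -/
theorem subset_system_card_ten {α : Type*} [DecidableEq α] (S : Finset α)
    (hS : S.card = 10) (𝔖 : Finset (Finset α))
    (hsub : ∀ s ∈ 𝔖, s ⊆ S)
    (hdiff : ∀ r ∈ 𝔖, ∀ s ∈ 𝔖, (symmDiff r s).card ∈ ({0, 4, 6, 10} : Set ℕ))
    (hcompl : ∀ s ∈ 𝔖, S \ s ∈ 𝔖) :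
    𝔖.card ≤ 32 := by
  classical
  set n : ℤ := (𝔖.card : ℤ) with hn
  set F : Finset α → α → ℤ := fun r a => if a ∈ r then 1 else -1 with hF
  -- inner product formula
  have hIP : ∀ r ∈ 𝔖, ∀ s ∈ 𝔖, ∑ a ∈ S, F r a * F s a
      = 10 - 2 * ((symmDiff r s).card : ℤ) := by
    intro r hr s hs
    rw [hF]
    rw [sum_pm_eq S r s (hsub r hr) (hsub s hs), hS]
    norm_num
  -- symmDiff with complement is S
  have hsdc : ∀ r ∈ 𝔖, symmDiff r (S \ r) = S := by
    intro r hr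
    ext a
    simp only [Finset.mem_symmDiff, Finset.mem_sdiff]
    constructor
    · rintro (⟨h, _⟩ | ⟨⟨h, _⟩, _⟩)
      · exact hsub r hr h
      · exact h
    · intro haS
      by_cases har : a ∈ r
      · left; exact ⟨har, fun h => h.2 har⟩
      · right; exact ⟨⟨haS, har⟩, har⟩
  have hcne : ∀ r ∈ 𝔖, S \ r ≠ r := by
    intro r hr h
    have h1 := hsdc r hr
    rw [h, symmDiff_self] at h1
    have := hS
    rw [← h1] at this
    simp at this
  -- card 10 symmDiff forces complement
  have hten : ∀ r ∈ 𝔖, ∀ s ∈ 𝔖, (symmDiff r s).card = 10 → s = S \ r := by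
    intro r hr s hs h10
    have hsub' : symmDiff r s ⊆ S := by
      intro a ha
      rw [Finset.mem_symmDiff] at ha
      rcases ha with ⟨h1, _⟩ | ⟨h1, _⟩
      · exact hsub r hr h1
      · exact hsub s hs h1
    have hSS : symmDiff r s = S :=
      Finset.eq_of_subset_of_card_le hsub' (by rw [h10, hS])
    ext a
    simp only [Finset.mem_sdiff]
    constructor
    · intro has
      refine ⟨hsub s hs has, fun har => ?_⟩
      have : a ∈ symmDiff r s → False := by
        rw [Finset.mem_symmDiff]; rintro (⟨_, h⟩ | ⟨_, h⟩) <;> exact h (by assumption)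
      exact this (hSS ▸ hsub s hs has)
    · rintro ⟨haS, har⟩
      have : a ∈ symmDiff r s := hSS ▸ haS
      rw [Finset.mem_symmDiff] at this
      rcases this with ⟨h1, _⟩ | ⟨h1, _⟩
      · exact absurd h1 har
      · exact h1
  -- row sums
  have hrow : ∀ r ∈ 𝔖, ∑ s ∈ 𝔖, (∑ a ∈ S, F r a * F s a) ^ 2 = 4 * (n - 2) + 200 := by
    intro r hr
    have hc : S \ r ∈ 𝔖 := hcompl r hr
    have hpair : ({r, S \ r} : Finset (Finset α)) ⊆ 𝔖 := by
      intro x hx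
      rcases Finset.mem_insert.mp hx with h | h
      · rwa [h]
      · rw [Finset.mem_singleton] at h; rwa [h]
    have hpc : ({r, S \ r} : Finset (Finset α)).card = 2 := by
      rw [Finset.card_insert_of_notMem (by simp [Ne.symm (hcne r hr)]), Finset.card_singleton]
    rw [← Finset.sum_sdiff hpair]
    have h1 : ∑ s ∈ 𝔖 \ {r, S \ r}, (∑ a ∈ S, F r a * F s a) ^ 2 = 4 * (n - 2) := by
      have hterm : ∀ s ∈ 𝔖 \ {r, S \ r}, (∑ a ∈ S, F r a * F s a) ^ 2 = 4 := by
        intro s hs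
        rw [Finset.mem_sdiff] at hs
        obtain ⟨hs𝔖, hsne⟩ := hs
        simp only [Finset.mem_insert, Finset.mem_singleton, not_or] at hsne
        have hd := hdiff r hr s hs𝔖
        simp only [Set.mem_insert_iff, Set.mem_singleton_iff] at hd
        rcases hd with h | h | h | h
        · exfalso
          have : symmDiff r s = ∅ := Finset.card_eq_zero.mp h
          rw [Finset.ext_iff] at this
          have : r = s := by
            ext a
            have := this a
            rw [Finset.mem_symmDiff] at this
            simp only [Finset.notMem_empty, iff_false] at this
            constructor <;> intro ha
            · by_contra has; exact this (Or.inl ⟨ha, has⟩)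
            · by_contra har; exact this (Or.inr ⟨ha, har⟩)
          exact hsne.1 (this.symm)
        · rw [hIP r hr s hs𝔖, h]; norm_num
        · rw [hIP r hr s hs𝔖, h]; norm_num
        · exact absurd (hten r hr s hs𝔖 h) hsne.2
      rw [Finset.sum_congr rfl hterm, Finset.sum_const, Finset.card_sdiff_of_subset hpair, hpc]
      have h2 : 2 ≤ 𝔖.card := by
        calc 2 = ({r, S \ r} : Finset (Finset α)).card := hpc.symm
          _ ≤ 𝔖.card := Finset.card_le_card hpair
      rw [nsmul_eq_mul, Nat.cast_sub h2, ← hn]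
      push_cast
      ring
    have h2 : ∑ s ∈ ({r, S \ r} : Finset (Finset α)), (∑ a ∈ S, F r a * F s a) ^ 2 = 200 := by
      rw [Finset.sum_pair (Ne.symm (hcne r hr))]
      rw [hIP r hr r hr, hIP r hr (S \ r) hc, symmDiff_self, hsdc r hr]
      simp [hS]
    rw [h1, h2]
  -- total LHS
  have hLHS : ∑ r ∈ 𝔖, ∑ s ∈ 𝔖, (∑ a ∈ S, F r a * F s a) ^ 2 = n * (4 * (n - 2) + 200) := by
    rw [Finset.sum_congr rfl hrow, Finset.sum_const, hn]
    ring
  -- diagonal lower bound for RHS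
  have hdiag : ∀ a : α, (∑ r ∈ 𝔖, F r a * F r a) = n := by
    intro a
    have : ∀ r ∈ 𝔖, F r a * F r a = 1 := by
      intro r _
      rw [hF]
      by_cases h : a ∈ r <;> simp [h]
    rw [Finset.sum_congr rfl this, Finset.sum_const, hn]
    simp
  have hRHS : 10 * n ^ 2 ≤ ∑ a ∈ S, ∑ b ∈ S, (∑ r ∈ 𝔖, F r a * F r b) ^ 2 := by
    have hstep : ∀ a ∈ S, n ^ 2 ≤ ∑ b ∈ S, (∑ r ∈ 𝔖, F r a * F r b) ^ 2 := by
      intro a ha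
      have h := Finset.single_le_sum
        (f := fun b => (∑ r ∈ 𝔖, F r a * F r b) ^ 2) (fun b _ => sq_nonneg _) ha
      calc n ^ 2 = (∑ r ∈ 𝔖, F r a * F r a) ^ 2 := by rw [hdiag a]
        _ ≤ _ := by simpa using h
    calc 10 * n ^ 2 = ∑ _a ∈ S, n ^ 2 := by rw [Finset.sum_const, hS]; ring
      _ ≤ _ := Finset.sum_le_sum hstep
  have hmain : 10 * n ^ 2 ≤ n * (4 * (n - 2) + 200) := by
    rw [← hLHS, quad_swap 𝔖 S F]
    exact hRHS
  have hn0 : (0:ℤ) ≤ n := by rw [hn]; positivity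
  have h32 : n ≤ 32 := by nlinarith
  rw [hn] at h32
  exact_mod_cast h32
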